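/- For fixed N > 0 and R ≥ 0, the function f(γ) = √N · ln 2 · (log₂(1+γ) − R)/√(1 − (1+γ)⁻²) is concave on (0, ∞), i.e., its second derivative with respect to γ is ≤ 0. -/

import Mathlib

lemma phi_deriv (x : ℝ) (hx0 : x ≠ 0) :
    HasDerivAt (fun z : ℝ => z - 1/z - 2 * Real.log z) (1 + 1/x^2 - 2/x) x := by
  have h1 : HasDerivAt (fun z : ℝ => z - 1/z - 2 * Real.log z)
      (1 - (-(x^2)⁻¹) - 2 * x⁻¹) x := by
    have := ((hasDerivAt_id x).sub ((hasDerivAt_inv hx0).const_mul (1:ℝ))).sub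
      ((Real.hasDerivAt_log hx0).const_mul 2)
    convert this using 2
    · rfl
    · rfl
    · simp only [Pi.sub_apply, id, one_div, one_mul]
    · ring
  convert h1 using 1
  field_simp
  ring

lemma two_log_le (z : ℝ) (hz : 1 ≤ z) : 2 * Real.log z ≤ z - 1/z := by
  have h := monotoneOn_of_deriv_nonneg (convex_Ici 1)
    (f := fun z : ℝ => z - 1/z - 2 * Real.log z)
    (by
      intro x hx
      simp only [Set.mem_Ici] at hx
      exact (phi_deriv x (by linarith)).continuousAt.continuousWithinAt)
    (by
      intro x hx
      rw [interior_Ici] at hx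
      simp only [Set.mem_Ioi] at hx
      exact (phi_deriv x (by linarith)).differentiableAt.differentiableWithinAt)
    (by
      intro x hx
      rw [interior_Ici] at hx
      simp only [Set.mem_Ioi] at hx
      rw [(phi_deriv x (by linarith)).deriv]
      have hx0 : x ≠ 0 := by linarith
      have he : 1 + 1/x^2 - 2/x = (1 - 1/x)^2 := by field_simp; ring
      rw [he]; positivity)
  have := h (Set.self_mem_Ici) (Set.mem_Ici.mpr hz) hz
  simp only [Real.log_one] at this
  linarith [this]

lemma K_nonpos (x c : ℝ) (hx : 1 ≤ x) (hc : 0 ≤ c) :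
    (-x - 1/x) * (x^2 - 1) + 3 * x * (Real.log x - c) ≤ 0 := by
  have hx0 : (0:ℝ) < x := by linarith
  have h := two_log_le (x^2) (one_le_pow₀ hx)
  rw [Real.log_pow] at h
  push_cast at h
  -- h : 2 * (2 * log x) ≤ x^2 - 1/x^2
  have hlog : 4 * Real.log x ≤ x^2 - 1/(x^2) := by linarith
  have h2 : 3 * x * Real.log x ≤ (x + 1/x) * (x^2 - 1) := by
    have hx2 : (0:ℝ) < x^2 := by positivity
    have e : (x + 1/x) * (x^2 - 1) = x^3 - 1/x := by field_simp; ring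
    rw [e]
    have hm := mul_le_mul_of_nonneg_left hlog hx0.le
    have hinv : x * (1/x^2) = 1/x := by field_simp
    have hln : 0 ≤ x * Real.log x := mul_nonneg hx0.le (Real.log_nonneg hx)
    nlinarith [hm, hinv, hln]
  nlinarith [mul_nonneg (mul_nonneg (by norm_num : (0:ℝ) ≤ 3) hx0.le) hc]

section main
variable (N R : ℝ)

noncomputable def gg (N R : ℝ) : ℝ → ℝ := fun γ =>
  Real.sqrt N * ((Real.log (1+γ) - R * Real.log 2) * (1+γ) / Real.sqrt ((1+γ)^2 - 1))

noncomputable def FF1 (N R : ℝ) : ℝ → ℝ := fun γ =>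
  Real.sqrt N * (((1+γ)^2 - 1 - (Real.log (1+γ) - R * Real.log 2)) / (Real.sqrt ((1+γ)^2 - 1))^3)

noncomputable def FF2 (N R : ℝ) : ℝ → ℝ := fun γ =>
  Real.sqrt N * (((-(1+γ) - 1/(1+γ)) * ((1+γ)^2 - 1)
    + 3 * (1+γ) * (Real.log (1+γ) - R * Real.log 2)) / (Real.sqrt ((1+γ)^2 - 1))^5)

lemma hasDerivAt_gg (γ : ℝ) (hγ : 0 < γ) : HasDerivAt (gg N R) (FF1 N R γ) γ := by
  set x := 1 + γ with hxdef
  have hx1 : (1:ℝ) < x := by simp [hxdef]; linarith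
  have hx0 : x ≠ 0 := by linarith
  have hs : (0:ℝ) < x^2 - 1 := by nlinarith
  set q := Real.sqrt (x^2 - 1) with hqdef
  have hqpos : 0 < q := Real.sqrt_pos.mpr hs
  have hq2 : q^2 = x^2 - 1 := Real.sq_sqrt hs.le
  have hlin : HasDerivAt (fun γ:ℝ => 1+γ) 1 γ := (hasDerivAt_id γ).const_add 1
  have hlog : HasDerivAt (fun γ:ℝ => Real.log (1+γ)) (x⁻¹ * 1) γ :=
    (Real.hasDerivAt_log hx0).comp γ hlin
  have hu : HasDerivAt (fun γ:ℝ => Real.log (1+γ) - R * Real.log 2) (x⁻¹ * 1) γ :=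
    hlog.sub_const _
  have huv : HasDerivAt (fun γ:ℝ => (Real.log (1+γ) - R * Real.log 2) * (1+γ))
      (x⁻¹ * 1 * (1+γ) + (Real.log (1+γ) - R * Real.log 2) * 1) γ := hu.mul hlin
  have hinner : HasDerivAt (fun γ:ℝ => (1+γ)^2 - 1) ((2:ℕ) * (1+γ)^(2-1) * 1) γ :=
    (hlin.pow 2).sub_const 1
  have hqd : HasDerivAt (fun γ:ℝ => Real.sqrt ((1+γ)^2 - 1))
      (1 / (2 * q) * ((2:ℕ) * (1+γ)^(2-1) * 1)) γ :=
    (Real.hasDerivAt_sqrt hs.ne').comp γ hinner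
  have hdiv := (huv.div hqd hqpos.ne').const_mul (Real.sqrt N)
  convert hdiv using 1
  · rfl
  · rfl
  · rfl
  rw [FF1]
  have hx2 : x^2 = q^2 + 1 := by rw [hq2]; ring
  simp only [← hxdef, ← hqdef]
  push_cast
  field_simp
  have hq2' : q^2 = γ^2 + 2*γ := by rw [hq2, hxdef]; ring
  ring_nf
  linear_combination (-Real.sqrt N*(Real.log x - R*Real.log 2 + 1)) * hq2'

lemma hasDerivAt_FF1 (γ : ℝ) (hγ : 0 < γ) : HasDerivAt (FF1 N R) (FF2 N R γ) γ := by
  set x := 1 + γ with hxdef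
  have hx1 : (1:ℝ) < x := by simp [hxdef]; linarith
  have hx0 : x ≠ 0 := by linarith
  have hs : (0:ℝ) < x^2 - 1 := by nlinarith
  set q := Real.sqrt (x^2 - 1) with hqdef
  have hqpos : 0 < q := Real.sqrt_pos.mpr hs
  have hq2 : q^2 = x^2 - 1 := Real.sq_sqrt hs.le
  have hlin : HasDerivAt (fun γ:ℝ => 1+γ) 1 γ := (hasDerivAt_id γ).const_add 1
  have hlog : HasDerivAt (fun γ:ℝ => Real.log (1+γ)) (x⁻¹ * 1) γ :=
    (Real.hasDerivAt_log hx0).comp γ hlin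
  have hu : HasDerivAt (fun γ:ℝ => Real.log (1+γ) - R * Real.log 2) (x⁻¹ * 1) γ :=
    hlog.sub_const _
  have hinner : HasDerivAt (fun γ:ℝ => (1+γ)^2 - 1) ((2:ℕ) * (1+γ)^(2-1) * 1) γ :=
    (hlin.pow 2).sub_const 1
  have hP : HasDerivAt (fun γ:ℝ => (1+γ)^2 - 1 - (Real.log (1+γ) - R * Real.log 2))
      ((2:ℕ) * (1+γ)^(2-1) * 1 - x⁻¹ * 1) γ := hinner.sub hu
  have hqd : HasDerivAt (fun γ:ℝ => Real.sqrt ((1+γ)^2 - 1))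
      (1 / (2 * q) * ((2:ℕ) * (1+γ)^(2-1) * 1)) γ :=
    (Real.hasDerivAt_sqrt hs.ne').comp γ hinner
  have hq3 : HasDerivAt (fun γ:ℝ => (Real.sqrt ((1+γ)^2 - 1))^3)
      ((3:ℕ) * (Real.sqrt ((1+γ)^2 - 1))^(3-1) * (1 / (2 * q) * ((2:ℕ) * (1+γ)^(2-1) * 1))) γ :=
    hqd.pow 3
  have hdiv := (hP.div hq3 (pow_ne_zero 3 hqpos.ne')).const_mul (Real.sqrt N)
  convert hdiv using 1
  · rfl
  · rfl
  · rfl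
  rw [FF2]
  simp only [← hxdef, ← hqdef]
  have hq2' : q^2 = γ^2 + 2*γ := by rw [hq2, hxdef]; ring
  push_cast
  field_simp
  ring_nf
  linear_combination (Real.sqrt N * (- 4*γ - 2*γ^2 - 1)) * hq2'

lemma FF2_nonpos (hR : 0 ≤ R) (γ : ℝ) (hγ : 0 < γ) : FF2 N R γ ≤ 0 := by
  rw [FF2]
  have hx1 : (1:ℝ) ≤ 1 + γ := by linarith
  have hc : 0 ≤ R * Real.log 2 := mul_nonneg hR (Real.log_nonneg (by norm_num))
  have hK := K_nonpos (1+γ) (R * Real.log 2) hx1 hc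
  have hq : 0 ≤ (Real.sqrt ((1+γ)^2 - 1))^5 := by positivity
  exact mul_nonpos_of_nonneg_of_nonpos (Real.sqrt_nonneg N)
    (div_nonpos_of_nonpos_of_nonneg hK hq)

lemma f_eq_gg (γ : ℝ) (hγ : 0 < γ) :
    Real.sqrt N * Real.log 2 *
      ((Real.log (1 + γ) / Real.log 2 - R) / Real.sqrt (1 - ((1 + γ) ^ 2)⁻¹)) = gg N R γ := by
  rw [gg]
  have hx0 : (0:ℝ) < 1 + γ := by linarith
  have hs : (0:ℝ) < (1+γ)^2 - 1 := by nlinarith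
  have hsq : Real.sqrt (1 - ((1+γ)^2)⁻¹) = Real.sqrt ((1+γ)^2 - 1) / (1+γ) := by
    rw [show 1 - ((1+γ)^2)⁻¹ = ((1+γ)^2 - 1) / (1+γ)^2 by field_simp,
      Real.sqrt_div hs.le, Real.sqrt_sq hx0.le]
  rw [hsq]
  have hq : 0 < Real.sqrt ((1+γ)^2 - 1) := Real.sqrt_pos.mpr hs
  have hl2 : Real.log 2 ≠ 0 := ne_of_gt (Real.log_pos (by norm_num))
  field_simp
end main

theorem f_concave (N R : ℝ) (hN : 0 < N) (hR : 0 ≤ R) :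
    ConcaveOn ℝ (Set.Ioi (0 : ℝ))
      (fun γ : ℝ => Real.sqrt N * Real.log 2 *
        ((Real.log (1 + γ) / Real.log 2 - R) / Real.sqrt (1 - ((1 + γ) ^ 2)⁻¹))) ∧
    ∀ γ : ℝ, 0 < γ →
      deriv (deriv (fun γ : ℝ => Real.sqrt N * Real.log 2 *
        ((Real.log (1 + γ) / Real.log 2 - R) / Real.sqrt (1 - ((1 + γ) ^ 2)⁻¹)))) γ ≤ 0 := by
  set F : ℝ → ℝ := fun γ : ℝ => Real.sqrt N * Real.log 2 *
        ((Real.log (1 + γ) / Real.log 2 - R) / Real.sqrt (1 - ((1 + γ) ^ 2)⁻¹)) with hF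
  have hfg : ∀ γ ∈ Set.Ioi (0:ℝ), F γ = gg N R γ := fun γ hγ => f_eq_gg N R γ hγ
  have hev : ∀ γ : ℝ, 0 < γ → F =ᶠ[nhds γ] gg N R := fun γ hγ =>
    Filter.eventuallyEq_of_mem (isOpen_Ioi.mem_nhds hγ) hfg
  have hdF : ∀ γ : ℝ, 0 < γ → DifferentiableAt ℝ F γ := fun γ hγ =>
    ((hev γ hγ).differentiableAt_iff).mpr (hasDerivAt_gg N R γ hγ).differentiableAt
  have hd1 : ∀ γ : ℝ, 0 < γ → deriv F γ = FF1 N R γ := fun γ hγ => by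
    rw [(hev γ hγ).deriv_eq, (hasDerivAt_gg N R γ hγ).deriv]
  have hev1 : ∀ γ : ℝ, 0 < γ → deriv F =ᶠ[nhds γ] FF1 N R := fun γ hγ =>
    Filter.eventuallyEq_of_mem (isOpen_Ioi.mem_nhds hγ) (fun y hy => hd1 y hy)
  have hd2 : ∀ γ : ℝ, 0 < γ → deriv (deriv F) γ = FF2 N R γ := fun γ hγ => by
    rw [(hev1 γ hγ).deriv_eq, (hasDerivAt_FF1 N R γ hγ).deriv]
  constructor
  · apply concaveOn_of_deriv2_nonpos (convex_Ioi 0)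
    · exact fun γ hγ => (hdF γ hγ).continuousAt.continuousWithinAt
    · rw [interior_Ioi]
      exact fun γ hγ => (hdF γ hγ).differentiableWithinAt
    · rw [interior_Ioi]
      intro γ hγ
      exact (((hev1 γ hγ).differentiableAt_iff).mpr
        (hasDerivAt_FF1 N R γ hγ).differentiableAt).differentiableWithinAt
    · rw [interior_Ioi]
      intro γ hγ
      simp only [Function.iterate_succ_apply', Function.iterate_zero_apply]
      rw [hd2 γ hγ]
      exact FF2_nonpos N R hR γ hγ
  · intro γ hγ
    rw [hd2 γ hγ]
    exact FF2_nonpos N R hR γ hγ
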